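/- arXiv:1505.01996 — 2 statements merged into one kernel-verified Lean document; each statement's English description precedes it below -/
import Mathlib

section
/- With the labeling λ of Π_{n,s+1}, any maximal chain from 0̂ to the top element ([n],...,[n]) that contains an edge x ⋖ y with A(x) ≠ A(y) above the bottom edge is not strictly increasing; in particular, the unique increasing maximal chain of Π_{n,s+1} passes through the lexicographically least atom and has all its labels above the bottom edge of the form (n, *, *). -/
open Finset

/-- A vector partition of `[n]` into `s+1` components: a partition `P` of `[n]`
together with `s` labelings of its parts. -/
structure VPart (n s : ℕ) where
  P : Finpartition (Finset.univ : Finset (Fin n))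
  w : Fin s → Finset (Fin n) → Finset (Fin n)
  card_w : ∀ i : Fin s, ∀ B ∈ P.parts, (w i B).card = B.card
  part_w : ∀ i : Fin s, ∀ x : Fin n, ∃! B, B ∈ P.parts ∧ x ∈ w i B
  w_junk : ∀ i B, B ∉ P.parts → w i B = ∅

namespace VPart

variable {n s : ℕ}

@[ext] theorem ext' {x y : VPart n s} (hP : x.P = y.P) (hw : x.w = y.w) : x = y := by
  cases x; cases y; simp_all

/-- componentwise union-refinement order -/
instance : PartialOrder (VPart n s) where
  le x y := x.P ≤ y.P ∧
    ∀ i : Fin s, ∀ B ∈ x.P.parts, ∀ B' ∈ y.P.parts, B ⊆ B' → x.w i B ⊆ y.w i B'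
  le_refl x := by
    refine ⟨le_refl _, fun i B hB B' hB' hBB' => ?_⟩
    obtain rfl : B = B' := by
      obtain ⟨a, ha⟩ := x.P.nonempty_of_mem_parts hB
      exact x.P.eq_of_mem_parts hB hB' ha (hBB' ha)
    exact subset_rfl
  le_trans x y z hxy hyz := by
    refine ⟨le_trans hxy.1 hyz.1, fun i B hB B'' hB'' hBB'' => ?_⟩
    obtain ⟨B', hB', hBB'⟩ := hxy.1 hB
    obtain ⟨B''', hB''', hB'B'''⟩ := hyz.1 hB'
    obtain ⟨a, ha⟩ := x.P.nonempty_of_mem_parts hB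
    obtain rfl : B''' = B'' :=
      z.P.eq_of_mem_parts hB''' hB'' (hB'B''' (hBB' ha)) (hBB'' ha)
    exact subset_trans (hxy.2 i B hB B' hB' hBB') (hyz.2 i B' hB' B''' hB''' hB'B''')
  le_antisymm x y hxy hyx := by
    have hP : x.P = y.P := le_antisymm hxy.1 hyx.1
    refine ext' hP ?_
    funext i B
    by_cases hB : B ∈ x.P.parts
    · exact subset_antisymm (hxy.2 i B hB B (hP ▸ hB) subset_rfl)
        (hyx.2 i B (hP ▸ hB) B hB subset_rfl)
    · rw [x.w_junk i B hB, y.w_junk i B (hP ▸ hB)]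

/-- the part of the underlying partition containing `k` -/
def partOf (x : VPart n s) (k : Fin n) : Finset (Fin n) := x.P.part k

/-- the atom word of `x`: `atomWord x i k` is the element of the `i`-th label of the
part containing `k` whose rank in that label matches the rank of `k` in its part. -/
def atomWord (x : VPart n s) (i : Fin s) (k : Fin n) : Fin n :=
  (((x.w i (x.partOf k)).sort (· ≤ ·)).getD (((x.partOf k).filter (· < k)).card)) k

/-- `x` is an atom: all parts of the underlying partition are singletons. -/
def IsAtomic (x : VPart n s) : Prop := ∀ B ∈ x.P.parts, B.card = 1

/-- strict lexicographic order on atom words, with `i` as the major index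
and `k` the minor index. -/
def wordLt (A B : Fin s → Fin n → Fin n) : Prop :=
  ∃ i k, A i k < B i k ∧
    ∀ i' k', (i' < i ∨ (i' = i ∧ k' < k)) → A i' k' = B i' k'

def wordLe (A B : Fin s → Fin n → Fin n) : Prop := wordLt A B ∨ A = B

end VPart

/-- labels: `ℤ × ℤ × ℤ` with the lexicographic order -/
abbrev Lbl : Type := ℤ ×ₗ ℤ ×ₗ ℤ

def mkLbl (a b c : ℤ) : Lbl := toLex (a, toLex (b, c))

namespace VPart

variable {n s : ℕ}

set_option maxHeartbeats 1000000 in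
open scoped Classical in
/-- the `(k,i,j)` label for an edge with distinct atom words (1-based) -/
noncomputable def firstDiff (x y : VPart n s) : Lbl :=
  let D : Finset (Fin n × Fin s) :=
    Finset.univ.filter fun p => atomWord x p.2 p.1 ≠ atomWord y p.2 p.1
  if h : D.Nonempty then
    have hk : (D.image Prod.fst).Nonempty := h.image _
    let k := (D.image Prod.fst).min' hk
    have hk2 : ((D.filter fun p => p.1 = k).image Prod.snd).Nonempty := by
      obtain ⟨p, hp, hpk⟩ := Finset.mem_image.mp ((D.image Prod.fst).min'_mem hk)
      exact ⟨p.2, Finset.mem_image.mpr ⟨p, Finset.mem_filter.mpr ⟨hp, hpk⟩, rfl⟩⟩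
    let i := ((D.filter fun p => p.1 = k).image Prod.snd).min' hk2
    mkLbl ((k : ℕ) + 1) ((i : ℕ) + 1) ((atomWord y i k : ℕ) + 1)
  else mkLbl 0 0 0

/-- the maximum (1-based) of the union of the two merged parts -/
noncomputable def mergeMax (x y : VPart n s) : ℤ :=
  ((y.P.parts \ x.P.parts).sup fun B => B.sup fun t => (t : ℕ) + 1 : ℕ)

/-- the (1-based) index of an atom in the lexicographic order on atoms -/
noncomputable def atomIndex (a : VPart n s) : ℤ :=
  (Nat.card {a' : VPart n s // a'.IsAtomic ∧ wordLe (atomWord a') (atomWord a)} : ℤ)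

/-- The edge labeling `λ` of `Π_{n,s+1}` (on arbitrary pairs; only its values on
covering pairs are relevant). -/
noncomputable def lam : WithBot (VPart n s) → WithBot (VPart n s) → Lbl
  | ⊥, (y : VPart n s) => mkLbl ((n : ℤ) - 1) (s + atomIndex y) 0
  | (x : VPart n s), (y : VPart n s) =>
      if atomWord x = atomWord y then mkLbl n (mergeMax x y) 0 else firstDiff x y
  | _, _ => mkLbl 0 0 0

end VPart

namespace VPart

variable {n s : ℕ}

/-- In a strictly sorted list, the element at the index counting smaller elements is itself. -/
theorem getD_countP_sorted {k : Fin n} :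
    ∀ {l : List (Fin n)}, l.Pairwise (· < ·) → k ∈ l → ∀ d : Fin n,
      l.getD (l.countP fun x => decide (x < k)) d = k := by
  intro l
  induction l with
  | nil => intro _ hk; simp at hk
  | cons a t ih =>
    intro hs hk d
    obtain ⟨ha, ht⟩ := List.pairwise_cons.mp hs
    rcases List.mem_cons.mp hk with rfl | hkt
    · have h0 : ((k :: t).countP fun x => decide (x < k)) = 0 := by
        rw [List.countP_eq_zero]
        intro x hx
        rcases List.mem_cons.mp hx with rfl | hxt
        · simp
        · simpa using (ha x hxt).not_gt
      rw [h0]; rfl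
    · have hak : a < k := ha k hkt
      have : ((a :: t).countP fun x => decide (x < k)) =
          (t.countP fun x => decide (x < k)) + 1 := by
        rw [List.countP_cons]; simp [hak]
      rw [this, List.getD_cons_succ]
      exact ih ht hkt d

theorem card_filter_eq_countP_sort (B : Finset (Fin n)) (k : Fin n) :
    (B.filter (· < k)).card = ((B.sort (· ≤ ·)).countP fun x => decide (x < k)) := by
  rw [Finset.card_filter]
  rw [← Multiset.coe_countP, Finset.sort_eq]
  simp [Multiset.countP_eq_card_filter, Finset.filter]

theorem partOf_mem (x : VPart n s) (k : Fin n) : x.partOf k ∈ x.P.parts :=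
  x.P.part_mem.mpr (Finset.mem_univ k)

theorem mem_partOf (x : VPart n s) (k : Fin n) : k ∈ x.partOf k :=
  x.P.mem_part (Finset.mem_univ k)

theorem rank_lt_card {B : Finset (Fin n)} {k : Fin n} (hk : k ∈ B) :
    (B.filter (· < k)).card < B.card := by
  refine Finset.card_lt_card ⟨Finset.filter_subset _ _, fun hsub => ?_⟩
  have := hsub hk
  simp at this

theorem atomWord_eq_self {x : VPart n s} {i : Fin s} {k : Fin n}
    (h : x.w i (x.partOf k) = x.partOf k) : atomWord x i k = k := by
  unfold atomWord
  rw [h, card_filter_eq_countP_sort]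
  exact getD_countP_sorted (Finset.sortedLT_sort _).pairwise ((Finset.mem_sort _).mpr (mem_partOf x k)) k

theorem rank_lt_length {x : VPart n s} {i : Fin s} {k : Fin n} :
    ((x.partOf k).filter (· < k)).card < ((x.w i (x.partOf k)).sort (· ≤ ·)).length := by
  rw [Finset.length_sort, x.card_w i _ (partOf_mem x k)]
  exact rank_lt_card (mem_partOf x k)

theorem atomWord_mem (x : VPart n s) (i : Fin s) (k : Fin n) :
    atomWord x i k ∈ x.w i (x.partOf k) := by
  have h := rank_lt_length (x := x) (i := i) (k := k)
  unfold atomWord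
  rw [List.getD_eq_getElem _ _ h]
  rw [← Finset.mem_sort (· ≤ ·)]
  exact List.getElem_mem _

theorem atomWord_inj (x : VPart n s) (i : Fin s) : Function.Injective (atomWord x i) := by
  intro k k' hkk'
  by_contra hne
  by_cases hpart : x.partOf k = x.partOf k'
  · -- same part: ranks differ, sorted-list entries differ
    wlog hlt : k < k' generalizing k k'
    · exact this hkk'.symm (Ne.symm hne) hpart.symm (lt_of_le_of_ne (not_lt.mp hlt) (Ne.symm hne))
    · have hrank : ((x.partOf k).filter (· < k)).card ≠ ((x.partOf k').filter (· < k')).card := by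
        rw [hpart]
        have hsub1 : (x.partOf k').filter (· < k) ⊆ (x.partOf k').filter (· < k') := by
          intro a ha; rw [Finset.mem_filter] at ha ⊢; exact ⟨ha.1, ha.2.trans hlt⟩
        have hkmem : k ∈ (x.partOf k').filter (· < k') :=
          Finset.mem_filter.mpr ⟨hpart ▸ mem_partOf x k, hlt⟩
        have hknot : k ∉ (x.partOf k').filter (· < k) := by simp
        exact (Finset.card_lt_card ⟨hsub1, fun h => hknot (h hkmem)⟩).ne
      have h1 := rank_lt_length (x := x) (i := i) (k := k)
      have h2 := rank_lt_length (x := x) (i := i) (k := k')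
      unfold atomWord at hkk'
      rw [List.getD_eq_getElem _ _ h1, List.getD_eq_getElem _ _ h2] at hkk'
      simp only [hpart] at hkk' h1 hrank
      have hnd : (((x.w i (x.partOf k')).sort (· ≤ ·)) : List (Fin n)).Nodup :=
        Finset.sort_nodup _ _
      exact hrank ((hnd.getElem_inj_iff).mp hkk')
  · -- different parts: the w-sets are disjoint
    have h1 := atomWord_mem x i k
    have h2 := atomWord_mem x i k'
    rw [hkk'] at h1
    have hu := (x.part_w i (atomWord x i k')).unique
      ⟨partOf_mem x k, h1⟩ ⟨partOf_mem x k', h2⟩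
    exact hpart hu

theorem atomWord_bij (x : VPart n s) (i : Fin s) : Function.Bijective (atomWord x i) :=
  Finite.injective_iff_bijective.mp (atomWord_inj x i)

end VPart

namespace VPart

variable {n s : ℕ}

/-- a vector partition with the "identity" labelings on a given partition -/
def ofPartition (P : Finpartition (Finset.univ : Finset (Fin n))) : VPart n s where
  P := P
  w _ B := if B ∈ P.parts then B else ∅
  card_w i B hB := by rw [if_pos hB]
  part_w i x := by
    obtain ⟨B, hB, hxB⟩ := P.exists_mem (Finset.mem_univ x)
    refine ⟨B, ⟨hB, by rw [if_pos hB]; exact hxB⟩, ?_⟩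
    rintro B' ⟨hB', hxB'⟩
    rw [if_pos hB'] at hxB'
    exact P.eq_of_mem_parts hB' hB hxB' hxB
  w_junk i B hB := by rw [if_neg hB]

theorem w_ofPartition_partOf (P : Finpartition (Finset.univ : Finset (Fin n))) (i : Fin s)
    (k : Fin n) : (ofPartition (s := s) P).w i ((ofPartition (s := s) P).partOf k)
      = (ofPartition (s := s) P).partOf k := by
  exact if_pos (partOf_mem _ k)

theorem atomWord_ofPartition (P : Finpartition (Finset.univ : Finset (Fin n))) :
    atomWord (ofPartition (s := s) P) = fun _ k => k := by
  funext i k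
  exact atomWord_eq_self (w_ofPartition_partOf P i k)

theorem isAtomic_ofPartition_bot : (ofPartition (s := s) (⊥ : Finpartition
    (Finset.univ : Finset (Fin n)))).IsAtomic := by
  intro B hB
  have hB' : B ∈ (⊥ : Finpartition (Finset.univ : Finset (Fin n))).parts := hB
  rw [Finpartition.parts_bot] at hB'
  obtain ⟨a, _, rfl⟩ := Finset.mem_map.mp hB'
  simp

/-- the identity word is minimal among words with injective components -/
theorem wordLe_of_inj {W : Fin s → Fin n → Fin n} (hW : ∀ i, Function.Injective (W i)) :
    wordLe (fun _ k => k) W := by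
  by_cases h : (fun _ k => k : Fin s → Fin n → Fin n) = W
  · exact Or.inr h
  left
  have hD : (Finset.univ.filter fun p : Lex (Fin s × Fin n) =>
      W (ofLex p).1 (ofLex p).2 ≠ (ofLex p).2).Nonempty := by
    rw [Finset.filter_nonempty_iff]
    by_contra hc
    push_neg at hc
    exact h (funext fun i => funext fun k =>
      ((hc (toLex (i, k)) (Finset.mem_univ _))).symm)
  set D := (Finset.univ.filter fun p : Lex (Fin s × Fin n) =>
      W (ofLex p).1 (ofLex p).2 ≠ (ofLex p).2) with hDdef
  set m := D.min' hD with hm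
  have hmD : m ∈ D := D.min'_mem hD
  set i := (ofLex m).1 with hi
  set k := (ofLex m).2 with hk
  have hne : W i k ≠ k := (Finset.mem_filter.mp hmD).2
  have hearlier : ∀ i' k', (i' < i ∨ (i' = i ∧ k' < k)) → W i' k' = k' := by
    intro i' k' h'
    by_contra hc
    have hmem : toLex (i', k') ∈ D := Finset.mem_filter.mpr ⟨Finset.mem_univ _, hc⟩
    have hle := D.min'_le _ hmem
    rw [← hm] at hle
    have hlt : toLex (i', k') < toLex (i, k) := Prod.Lex.lt_iff.mpr h'
    have hmeq : toLex (i, k) = m := rfl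
    rw [hmeq] at hlt
    exact absurd hle (not_le.mpr hlt)
  have hgt : k < W i k := by
    rcases lt_or_ge k (W i k) with h' | h'
    · exact h'
    have h'' : W i k < k := lt_of_le_of_ne h' hne
    have := hearlier i (W i k) (Or.inr ⟨rfl, h''⟩)
    exact absurd (hW i this) (ne_of_lt h'')
  exact ⟨i, k, hgt, fun i' k' h' => (hearlier i' k' h').symm⟩

end VPart

namespace VPart

variable {n s : ℕ}

instance : Finite (VPart n s) :=
  Finite.of_injective (fun x => (x.P, x.w)) (by
    intro x y h
    exact ext' (congrArg Prod.fst h) (congrArg Prod.snd h))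

theorem atomIndex_pos (y : VPart n s) : 1 ≤ atomIndex y := by
  have hne : Nonempty {a' : VPart n s // a'.IsAtomic ∧ wordLe (atomWord a') (atomWord y)} := by
    refine ⟨⟨ofPartition ⊥, isAtomic_ofPartition_bot, ?_⟩⟩
    rw [atomWord_ofPartition]
    exact wordLe_of_inj (atomWord_inj y)
  have := Nat.card_pos (α := {a' : VPart n s // a'.IsAtomic ∧ wordLe (atomWord a') (atomWord y)})
  unfold atomIndex
  exact_mod_cast this

/-- the canonical atomic element below `x` -/
def aOf (x : VPart n s) : VPart n s where
  P := ⊥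
  w i B := if B ∈ (⊥ : Finpartition (Finset.univ : Finset (Fin n))).parts
    then B.image (atomWord x i) else ∅
  card_w i B hB := by
    rw [if_pos hB]
    exact Finset.card_image_of_injective _ (atomWord_inj x i)
  part_w i t := by
    obtain ⟨k, hk⟩ := (atomWord_bij x i).surjective t
    have hmem : ({k} : Finset (Fin n)) ∈ (⊥ : Finpartition (Finset.univ : Finset (Fin n))).parts := by
      rw [Finpartition.parts_bot]
      exact Finset.mem_map.mpr ⟨k, Finset.mem_univ k, rfl⟩
    refine ⟨{k}, ⟨hmem, by rw [if_pos hmem, Finset.image_singleton, hk]; exact Finset.mem_singleton_self t⟩, ?_⟩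
    rintro B' ⟨hB', htB'⟩
    rw [if_pos hB'] at htB'
    have hB'2 := hB'
    rw [Finpartition.parts_bot] at hB'2
    obtain ⟨a, _, rfl⟩ := Finset.mem_map.mp hB'2
    simp only [Function.Embedding.coeFn_mk, Finset.image_singleton, Finset.mem_singleton] at htB' ⊢
    rw [← hk] at htB'
    rw [atomWord_inj x i htB']
  w_junk i B hB := by rw [if_neg hB]

theorem aOf_isAtomic (x : VPart n s) : (aOf x).IsAtomic := by
  intro B hB
  have hB' : B ∈ (⊥ : Finpartition (Finset.univ : Finset (Fin n))).parts := hB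
  rw [Finpartition.parts_bot] at hB'
  obtain ⟨a, _, rfl⟩ := Finset.mem_map.mp hB'
  simp

theorem aOf_le (x : VPart n s) : aOf x ≤ x := by
  refine ⟨bot_le, fun i B hB B' hB' hBB' => ?_⟩
  have hB2 : B ∈ (⊥ : Finpartition (Finset.univ : Finset (Fin n))).parts := hB
  rw [Finpartition.parts_bot] at hB2
  obtain ⟨k, _, rfl⟩ := Finset.mem_map.mp hB2
  simp only [Function.Embedding.coeFn_mk] at hB hBB' ⊢
  have hBb : ({k} : Finset (Fin n)) ∈ (⊥ : Finpartition (Finset.univ : Finset (Fin n))).parts := hB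
  have heq : (aOf x).w i {k} = {atomWord x i k} := by
    show (if _ then _ else _) = _
    rw [if_pos hBb, Finset.image_singleton]
  rw [heq, Finset.singleton_subset_iff]
  have hkB' : k ∈ B' := hBB' (Finset.mem_singleton_self k)
  have hpart : x.partOf k = B' := x.P.part_eq_of_mem hB' hkB'
  rw [← hpart]
  exact atomWord_mem x i k

/-- any cover of `⊥` in `WithBot (VPart n s)` is atomic -/
theorem isAtomic_of_covby {a : VPart n s} (h : (⊥ : WithBot (VPart n s)) ⋖ (a : WithBot (VPart n s))) :
    a.IsAtomic := by
  have : aOf a = a := by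
    by_contra hne
    have hlt : aOf a < a := lt_of_le_of_ne (aOf_le a) hne
    exact h.2 (WithBot.bot_lt_coe _) (WithBot.coe_lt_coe.mpr hlt)
  rw [← this]
  exact aOf_isAtomic a

/-- two injective self-maps of `Fin n` agreeing away from a point agree there too -/
theorem inj_agree {f g : Fin n → Fin n} (hf : Function.Injective f)
    (hg : Function.Injective g) (a : Fin n) (h : ∀ b, b ≠ a → f b = g b) : f a = g a := by
  obtain ⟨b, hb⟩ := (Finite.injective_iff_surjective.mp hg) (f a)
  by_cases hba : b = a
  · rw [← hb, hba]
  · have h1 : f b = f a := (h b hba).trans hb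
    exact absurd (hf h1) hba

end VPart

namespace VPart

variable {n s : ℕ}

theorem firstDiff_spec (x y : VPart n s) (h : atomWord x ≠ atomWord y) :
    ∃ (k : Fin n) (i : Fin s) (j : ℤ),
      firstDiff x y = mkLbl ((k : ℕ) + 1) ((i : ℕ) + 1) j ∧
      ∀ (k' : Fin n) (i' : Fin s), atomWord x i' k' ≠ atomWord y i' k' → k ≤ k' := by
  have hD : (Finset.univ.filter fun p : Fin n × Fin s =>
      atomWord x p.2 p.1 ≠ atomWord y p.2 p.1).Nonempty := by
    rw [Finset.filter_nonempty_iff]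
    by_contra hc
    push_neg at hc
    refine h (funext fun i => funext fun k => ?_)
    have := hc (k, i) (Finset.mem_univ _)
    simpa using this
  simp only [firstDiff]
  rw [dif_pos hD]
  refine ⟨_, _, _, rfl, ?_⟩
  intro k' i' hki
  exact Finset.min'_le _ _ (Finset.mem_image.mpr
    ⟨(k', i'), Finset.mem_filter.mpr ⟨Finset.mem_univ _, hki⟩, rfl⟩)

theorem atomWord_of_isTop (hn : 1 ≤ n) {T : VPart n s}
    (hT : ∀ z : VPart n s, z ≤ T) : atomWord T = fun _ k => k := by
  haveI : NeZero n := ⟨by omega⟩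
  have huniv : (Finset.univ : Finset (Fin n)) ≠ ⊥ := by
    intro hempty
    exact absurd (Finset.mem_univ (0 : Fin n)) (by rw [hempty]; simp)
  set τ : VPart n s := ofPartition (Finpartition.indiscrete huniv) with hτdef
  obtain ⟨hP, _⟩ := hT τ
  have hu : (Finset.univ : Finset (Fin n)) ∈ τ.P.parts := Finset.mem_singleton_self _
  obtain ⟨B', hB', hsub⟩ := hP hu
  have hBu : B' = Finset.univ := subset_antisymm (Finset.subset_univ _) hsub
  subst hBu
  funext i k
  refine atomWord_eq_self ?_
  have hpart : T.partOf k = Finset.univ := T.P.part_eq_of_mem hB' (Finset.mem_univ k)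
  rw [hpart]
  refine Finset.eq_univ_of_card _ ?_
  rw [T.card_w i _ hB']
  simp

theorem key (hn : 1 ≤ n) (c : Fin (n + 1) → WithBot (VPart n s)) (h0 : c 0 = ⊥)
    (hcov : ∀ e : Fin n, c e.castSucc ⋖ c e.succ)
    (hmono : StrictMono fun e : Fin n => lam (c e.castSucc) (c e.succ)) :
    ∀ e : Fin n, 1 ≤ (e : ℕ) → ∀ X Y : VPart n s, c e.castSucc = X → c e.succ = Y →
      atomWord X = atomWord Y := by
  intro e he X Y hX hY
  by_contra hne
  haveI : NeZero n := ⟨by omega⟩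
  have hcs : (Fin.castSucc (0 : Fin n)) = (0 : Fin (n+1)) := Fin.ext (by simp)
  have h0c : c (0 : Fin n).castSucc = ⊥ := by rw [hcs]; exact h0
  have hcov0 := hcov 0
  rw [h0c] at hcov0
  have hbot : ∃ y : VPart n s, c (0 : Fin n).succ = y := by
    rcases hq : c (0 : Fin n).succ with _ | y
    · rw [hq] at hcov0; exact absurd hcov0.lt (lt_irrefl _)
    · exact ⟨y, rfl⟩
  obtain ⟨y, hy⟩ := hbot
  have hlab0 : lam (c (0 : Fin n).castSucc) (c (0 : Fin n).succ)
      = mkLbl ((n : ℤ) - 1) (s + atomIndex y) 0 := by rw [h0c, hy]; rfl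
  have hlabe : lam (c e.castSucc) (c e.succ) = firstDiff X Y := by
    rw [hX, hY]
    show (if _ then _ else _) = _
    rw [if_neg hne]
  obtain ⟨k, i, j, hfd, hmin⟩ := firstDiff_spec X Y hne
  have h0lt : (0 : Fin n) < e := by
    rw [Fin.lt_def]
    have h0v : ((0 : Fin n) : ℕ) = 0 := by simp
    omega
  have hlt := hmono h0lt
  simp only [hlab0, hlabe, hfd, mkLbl, Prod.Lex.lt_iff, ofLex_toLex] at hlt
  have hind := atomIndex_pos y
  have hkn := k.isLt
  have his := i.isLt
  rcases hlt with h1 | ⟨h1, h2⟩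
  · -- first coordinates: n-1 < k+1, so k is the last index
    have hk : (k : ℕ) = n - 1 := by omega
    have hagree : ∀ (k' : Fin n), k' ≠ k → ∀ i', atomWord X i' k' = atomWord Y i' k' := by
      intro k' hk' i'
      by_contra hc
      have hle := hmin k' i' hc
      rw [Fin.le_def] at hle
      have hk'lt := k'.isLt
      exact hk' (Fin.ext (by omega))
    refine hne (funext fun i' => funext fun k' => ?_)
    by_cases hk' : k' = k
    · subst hk'
      exact inj_agree (atomWord_inj X i') (atomWord_inj Y i') k'
        (fun b hb => hagree b hb i')
    · exact hagree k' hk' i'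
  · omega

end VPart

open VPart in
theorem statement17' (n s : ℕ) (hn : 1 ≤ n) :
    (∀ c : Fin (n + 1) -> WithBot (VPart n s), c 0 = ⊥ -> IsTop (c (Fin.last n)) ->
      (∀ e : Fin n, c e.castSucc ⋖ c e.succ) ->
      (∃ e : Fin n, 1 ≤ (e : ℕ) ∧ ∃ X Y : VPart n s, c e.castSucc = X ∧ c e.succ = Y ∧
        atomWord X ≠ atomWord Y) ->
      ¬ StrictMono fun e : Fin n => lam (c e.castSucc) (c e.succ)) ∧
    ∀ c : Fin (n + 1) -> WithBot (VPart n s), c 0 = ⊥ -> IsTop (c (Fin.last n)) ->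
      (∀ e : Fin n, c e.castSucc ⋖ c e.succ) ->
      StrictMono (fun e : Fin n => lam (c e.castSucc) (c e.succ)) ->
      (∃ a : VPart n s, c 1 = (a : WithBot (VPart n s)) ∧ a.IsAtomic ∧
        ∀ a' : VPart n s, a'.IsAtomic -> wordLe (atomWord a) (atomWord a')) ∧
      ∀ e : Fin n, 1 ≤ (e : ℕ) ->
        (ofLex (lam (c e.castSucc) (c e.succ))).1 = (n : ℤ) := by
  haveI : NeZero n := ⟨by omega⟩
  constructor
  · rintro c h0 _ hcov ⟨e, he, X, Y, hX, hY, hne⟩ hmono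
    exact hne (key hn c h0 hcov hmono e he X Y hX hY)
  · intro c h0 htop hcov hmono
    have hc : StrictMono c := Fin.strictMono_iff_lt_succ.mpr (fun i => (hcov i).lt)
    have hcs : (Fin.castSucc (0 : Fin n)) = (0 : Fin (n+1)) := Fin.ext (by simp)
    have hss : (Fin.succ (0 : Fin n)) = (1 : Fin (n+1)) := Fin.ext (by simp)
    have hcov0 := hcov 0
    have h0c : c (Fin.castSucc (0 : Fin n)) = ⊥ := by rw [hcs]; exact h0
    rw [h0c] at hcov0
    obtain ⟨a, ha⟩ : ∃ a : VPart n s, c (Fin.succ (0 : Fin n)) = a := by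
      rcases hq : c (Fin.succ (0 : Fin n)) with _ | a
      · rw [hq] at hcov0; exact absurd hcov0.lt (lt_irrefl _)
      · exact ⟨a, rfl⟩
    have ha1 : c 1 = (a : WithBot (VPart n s)) := by rw [← hss]; exact ha
    have hcovb : (⊥ : WithBot (VPart n s)) ⋖ (a : WithBot (VPart n s)) := by
      rw [← ha]; exact hcov0
    have hatom : a.IsAtomic := isAtomic_of_covby hcovb
    have h1v : ((1 : Fin (n+1)) : ℕ) = 1 := by
      rw [Fin.val_one']
      exact Nat.mod_eq_of_lt (by omega)
    have hnb : ∀ m : ℕ, ∀ _hm : m < n, ∃ Z : VPart n s, c ⟨m+1, by omega⟩ = (Z : WithBot (VPart n s)) := by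
      intro m hm
      have h1le : (1 : Fin (n+1)) ≤ ⟨m+1, by omega⟩ := by
        rw [Fin.le_def, h1v]
        exact Nat.le_add_left 1 m
      have hle := hc.monotone h1le
      rw [ha1] at hle
      rcases hq : c ⟨m+1, by omega⟩ with _ | Z
      · rw [hq] at hle; exact absurd hle (WithBot.not_coe_le_bot a)
      · exact ⟨Z, rfl⟩
    have hword : ∀ m : ℕ, ∀ _hm : m < n, ∀ Z : VPart n s,
        c ⟨m+1, by omega⟩ = (Z : WithBot (VPart n s)) → atomWord Z = atomWord a := by
      intro m
      induction m with
      | zero =>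
        intro hm Z hZ
        have h01 : (⟨0+1, by omega⟩ : Fin (n+1)) = 1 := Fin.ext (by rw [h1v])
        rw [h01, ha1] at hZ
        rw [WithBot.coe_inj.mp hZ.symm]
      | succ p ih =>
        intro hm Z hZ
        obtain ⟨X, hXeq⟩ := hnb p (by omega)
        have hip : atomWord X = atomWord a := ih (by omega) X hXeq
        have hkey := key hn c h0 hcov hmono ⟨p+1, hm⟩ (by simp) X Z hXeq hZ
        rw [← hkey]
        exact hip
    obtain ⟨T, hT⟩ := hnb (n-1) (by omega)
    have hTword : atomWord T = atomWord a := hword (n-1) (by omega) T hT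
    have hlasteq : (Fin.last n) = (⟨(n-1)+1, by omega⟩ : Fin (n+1)) := Fin.ext (by simp; omega)
    have hTtop : ∀ z : VPart n s, z ≤ T := by
      intro z
      have hz := htop (z : WithBot (VPart n s))
      rw [hlasteq, hT] at hz
      exact WithBot.coe_le_coe.mp hz
    have hid : atomWord a = fun _ k => k := by
      rw [← hTword]
      exact atomWord_of_isTop hn hTtop
    constructor
    · refine ⟨a, ha1, hatom, ?_⟩
      intro a' _
      rw [hid]
      exact wordLe_of_inj (atomWord_inj a')
    · intro e he
      obtain ⟨X, hX0⟩ := hnb (e.val - 1) (by omega)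
      have hX : c e.castSucc = (X : WithBot (VPart n s)) := by
        have : (⟨(e.val-1)+1, by omega⟩ : Fin (n+1)) = e.castSucc := by
          refine Fin.ext ?_
          simp only [Fin.coe_castSucc]
          omega
        rw [← this]
        exact hX0
      obtain ⟨Y, hY0⟩ := hnb e.val e.isLt
      have hY : c e.succ = (Y : WithBot (VPart n s)) := by
        have : (⟨e.val+1, by omega⟩ : Fin (n+1)) = e.succ := Fin.ext (by simp)
        rw [← this]
        exact hY0
      have heq := key hn c h0 hcov hmono e he X Y hX hY
      have hl : lam (c e.castSucc) (c e.succ) = mkLbl n (mergeMax X Y) 0 := by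
        rw [hX, hY]
        show (if _ then _ else _) = _
        rw [if_pos heq]
      rw [hl]
      rfl

open VPart in
/-- any maximal chain of `Π_{n,s+1}` containing an edge `x ⋖ y` above
the bottom edge with `A(x) ≠ A(y)` is not strictly increasing; consequently every
increasing maximal chain passes through the lexicographically least atom and all its
labels above the bottom edge have first coordinate `n`. -/
theorem statement17 (n s : ℕ) (hn : 1 ≤ n) :
    (∀ c : Fin (n + 1) -> WithBot (VPart n s), c 0 = ⊥ -> IsTop (c (Fin.last n)) ->
      (∀ e : Fin n, c e.castSucc ⋖ c e.succ) ->
      (∃ e : Fin n, 1 ≤ (e : ℕ) ∧ ∃ X Y : VPart n s, c e.castSucc = X ∧ c e.succ = Y ∧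
        atomWord X ≠ atomWord Y) ->
      ¬ StrictMono fun e : Fin n => lam (c e.castSucc) (c e.succ)) ∧
    ∀ c : Fin (n + 1) -> WithBot (VPart n s), c 0 = ⊥ -> IsTop (c (Fin.last n)) ->
      (∀ e : Fin n, c e.castSucc ⋖ c e.succ) ->
      StrictMono (fun e : Fin n => lam (c e.castSucc) (c e.succ)) ->
      (∃ a : VPart n s, c 1 = (a : WithBot (VPart n s)) ∧ a.IsAtomic ∧
        ∀ a' : VPart n s, a'.IsAtomic -> wordLe (atomWord a) (atomWord a')) ∧
      ∀ e : Fin n, 1 ≤ (e : ℕ) ->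
        (ofLex (lam (c e.castSucc) (c e.succ))).1 = (n : ℤ) := by
  exact statement17' n s hn
end

section
/- In the partition lattice Π_n with the Wachs labeling χ(x ⋖ y) = max(B₁ ∪ B₂) (where B₁, B₂ are the merged parts), every maximal chain from 0̂ to 1̂ has label multiset contained in {2, 3, ..., n}, and the unique strictly increasing maximal chain is the one with label word 2, 3, ..., n obtained by successively merging {1,...,k−1}'s block with {k} for k = 2, ..., n. -/
/-- The Wachs labeling of the partition lattice: the label of a cover `x ⋖ y`,
where `y` is obtained from `x` by merging parts `B₁` and `B₂`, is
`max (B₁ ∪ B₂)` (1-based). -/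
def chi {n : ℕ} (x y : Finpartition (Finset.univ : Finset (Fin n))) : ℕ :=
  (y.parts \ x.parts).sup fun B => B.sup fun a => (a : ℕ) + 1

open Finset

/-- The block `{0, 1, ..., m}` (as elements of `Fin n`). -/
def bigB (n m : ℕ) : Finset (Fin n) := univ.filter fun a => (a : ℕ) ≤ m

/-- The parts of the `m`-th partition in the canonical increasing chain. -/
def cparts (n m : ℕ) : Finset (Finset (Fin n)) :=
  insert (bigB n m) ((univ.filter fun a : Fin n => m < (a : ℕ)).image fun a => {a})

lemma mem_cparts {n m : ℕ} {B : Finset (Fin n)} :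
    B ∈ cparts n m ↔ B = bigB n m ∨ ∃ a : Fin n, m < (a : ℕ) ∧ B = {a} := by
  simp [cparts, eq_comm]

lemma mem_bigB {n m : ℕ} {x : Fin n} : x ∈ bigB n m ↔ (x : ℕ) ≤ m := by
  simp [bigB]

/-- The `m`-th partition in the canonical increasing chain. -/
def cpart (n m : ℕ) (hn : 0 < n) : Finpartition (univ : Finset (Fin n)) where
  parts := cparts n m
  supIndep := by
    rw [Finset.supIndep_iff_pairwiseDisjoint]
    intro B hB C hC hne
    rw [Finset.mem_coe, mem_cparts] at hB hC
    simp only [Function.onFun, id]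
    rw [Finset.disjoint_left]
    intro x hxB hxC
    rcases hB with rfl | ⟨a, ha, rfl⟩ <;> rcases hC with rfl | ⟨b, hb, rfl⟩
    · exact hne rfl
    · rw [mem_bigB] at hxB
      rw [mem_singleton] at hxC
      subst hxC; omega
    · rw [mem_bigB] at hxC
      rw [mem_singleton] at hxB
      subst hxB; omega
    · rw [mem_singleton] at hxB hxC
      subst hxB; subst hxC; exact hne rfl
  sup_parts := by
    apply le_antisymm
    · exact Finset.sup_le fun B _ => le_top
    · intro x _
      rw [Finset.mem_sup]
      by_cases h : (x : ℕ) ≤ m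
      · exact ⟨bigB n m, mem_insert_self _ _, mem_bigB.2 h⟩
      · exact ⟨{x}, mem_insert_of_mem
          (mem_image_of_mem _ (mem_filter.2 ⟨mem_univ x, by omega⟩)), mem_singleton_self x⟩
  bot_notMem := by
    intro hmem
    rcases mem_cparts.1 hmem with h | ⟨a, _, h⟩
    · have h0 : (⟨0, hn⟩ : Fin n) ∈ bigB n m := mem_bigB.2 (by simp)
      rw [← h] at h0
      simp at h0
    · have h0 : a ∈ ({a} : Finset (Fin n)) := mem_singleton_self a
      rw [← h] at h0
      simp at h0

@[simp] lemma cpart_parts {n m : ℕ} (hn : 0 < n) : (cpart n m hn).parts = cparts n m := rfl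

section generic
variable {α : Type*} [DecidableEq α] {s : Finset α} {P Q : Finpartition s}

lemma parts_subset_eq (h : P.parts ⊆ Q.parts) : P = Q := by
  apply Finpartition.ext
  apply Finset.Subset.antisymm h
  intro B hB
  obtain ⟨x, hx⟩ := Q.nonempty_of_mem_parts hB
  obtain ⟨t, ht, hxt⟩ := P.exists_mem (Q.le hB hx)
  have : t = B := Q.eq_of_mem_parts (h ht) hB hxt hx
  rwa [← this]

lemma diff_nonempty' (h : P ≠ Q) : (Q.parts \ P.parts).Nonempty := by
  rw [Finset.sdiff_nonempty]
  exact fun hs => h (parts_subset_eq hs).symm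

lemma part_subset_of_le (h : P ≤ Q) {B : Finset α} (hB : B ∈ Q.parts) {x : α} (hx : x ∈ B) :
    ∃ t ∈ P.parts, x ∈ t ∧ t ⊆ B := by
  obtain ⟨t, ht, hxt⟩ := P.exists_mem (Q.le hB hx)
  obtain ⟨u, hu, htu⟩ := h ht
  have : u = B := Q.eq_of_mem_parts hu hB (htu hxt) hx
  exact ⟨t, ht, hxt, this ▸ htu⟩

lemma exists_two (h : P ≤ Q) {B : Finset α} (hB : B ∈ Q.parts) (hB' : B ∉ P.parts) :
    ∃ x ∈ B, ∃ y ∈ B, x ≠ y := by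
  obtain ⟨x, hx⟩ := Q.nonempty_of_mem_parts hB
  obtain ⟨t, ht, hxt, htB⟩ := part_subset_of_le h hB hx
  have hne : t ≠ B := fun e => hB' (e ▸ ht)
  obtain ⟨y, hyB, hyt⟩ := Finset.exists_of_ssubset (htB.ssubset_of_ne hne)
  exact ⟨y, hyB, x, hx, fun e => hyt (e ▸ hxt)⟩

end generic

section chain
variable {n k m : ℕ}

lemma cpart_bot (hn : 0 < n) : (⊥ : Finpartition (univ : Finset (Fin n))) = cpart n 0 hn := by
  apply parts_subset_eq
  intro t ht
  obtain ⟨a, _, rfl⟩ := Finpartition.mem_bot_iff.1 ht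
  rw [cpart_parts, mem_cparts]
  by_cases ha : (a : ℕ) = 0
  · left
    ext x
    simp only [mem_singleton, mem_bigB]
    constructor
    · rintro rfl; omega
    · intro hx; exact Fin.ext (by omega)
  · exact Or.inr ⟨a, by omega, rfl⟩

lemma cpart_top (hn : 0 < n) : (⊤ : Finpartition (univ : Finset (Fin n))) = cpart n (n - 1) hn := by
  apply parts_subset_eq
  intro t ht
  have := Finpartition.parts_top_subset (univ : Finset (Fin n)) ht
  rw [mem_singleton] at this
  subst this
  rw [cpart_parts, mem_cparts]
  left
  ext x
  simp only [mem_univ, mem_bigB, true_iff]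
  omega

lemma cpart_le_succ (hn : 0 < n) : cpart n k hn ≤ cpart n (k + 1) hn := by
  intro B hB
  rcases mem_cparts.1 hB with rfl | ⟨a, ha, rfl⟩
  · refine ⟨bigB n (k + 1), mem_cparts.2 (Or.inl rfl), ?_⟩
    intro x hx; rw [mem_bigB] at hx ⊢; omega
  · by_cases h : (a : ℕ) ≤ k + 1
    · exact ⟨bigB n (k + 1), mem_cparts.2 (Or.inl rfl), singleton_subset_iff.2 (mem_bigB.2 h)⟩
    · exact ⟨{a}, mem_cparts.2 (Or.inr ⟨a, by omega, rfl⟩), Finset.Subset.refl _⟩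

lemma bigB_succ_not_mem (hn : 0 < n) (hk : k + 1 < n) : bigB n (k + 1) ∉ cparts n k := by
  intro h
  rcases mem_cparts.1 h with h | ⟨a, ha, h⟩
  · have h1 : (⟨k + 1, hk⟩ : Fin n) ∈ bigB n (k + 1) := mem_bigB.2 (by simp)
    rw [h] at h1
    rw [mem_bigB] at h1
    simp at h1
  · have h0 : (⟨0, hn⟩ : Fin n) ∈ bigB n (k + 1) := mem_bigB.2 (by simp)
    have h1 : (⟨k + 1, hk⟩ : Fin n) ∈ bigB n (k + 1) := mem_bigB.2 (by simp)
    rw [h, mem_singleton] at h0 h1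
    rw [← h1] at h0
    have := congrArg Fin.val h0
    simp at this

lemma cpart_lt_succ (hn : 0 < n) (hk : k + 1 < n) : cpart n k hn < cpart n (k + 1) hn := by
  refine lt_of_le_of_ne (cpart_le_succ hn) fun e => ?_
  have := congrArg Finpartition.parts e
  rw [cpart_parts, cpart_parts] at this
  exact bigB_succ_not_mem hn hk (this ▸ mem_cparts.2 (Or.inl rfl))

lemma partclass (hn : 0 < n) (hk : k + 1 < n)
    {z : Finpartition (univ : Finset (Fin n))} (hle : cpart n k hn ≤ z)
    {Q : Finset (Fin n)} (hQ : Q ∈ z.parts) (hQT : Q ⊆ bigB n (k + 1)) :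
    Q = bigB n (k + 1) ∨ Q ∈ cparts n k := by
  have H : ∀ x ∈ Q, ∀ t ∈ cparts n k, x ∈ t → t ⊆ Q := by
    intro x hx t ht hxt
    obtain ⟨t', ht', hxt', ht'Q⟩ := part_subset_of_le hle hQ hx
    rwa [(cpart n k hn).eq_of_mem_parts ht ht' hxt hxt']
  by_cases h1 : (⟨k + 1, hk⟩ : Fin n) ∈ Q
  · by_cases h2 : ∃ x ∈ Q, (x : ℕ) ≤ k
    · left
      obtain ⟨x, hxQ, hxk⟩ := h2
      have hbig : bigB n k ⊆ Q := H x hxQ _ (mem_cparts.2 (Or.inl rfl)) (mem_bigB.2 hxk)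
      apply Finset.Subset.antisymm hQT
      intro y hy
      rw [mem_bigB] at hy
      rcases Nat.lt_or_ge (y : ℕ) (k + 1) with h | h
      · exact hbig (mem_bigB.2 (by omega))
      · have hy2 : y = (⟨k + 1, hk⟩ : Fin n) := Fin.ext (by simp; omega)
        rw [hy2]; exact h1
    · right
      have hQs : Q = {(⟨k + 1, hk⟩ : Fin n)} := by
        apply Finset.Subset.antisymm
        · intro y hy
          have hy' := mem_bigB.1 (hQT hy)
          have h3 : ¬(y : ℕ) ≤ k := fun h => h2 ⟨y, hy, h⟩
          rw [mem_singleton]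
          exact Fin.ext (by simp; omega)
        · exact singleton_subset_iff.2 h1
      rw [hQs, mem_cparts]
      exact Or.inr ⟨_, by simp, rfl⟩
  · by_cases h2 : ∃ x ∈ Q, (x : ℕ) ≤ k
    · right
      obtain ⟨x, hxQ, hxk⟩ := h2
      have hbig : bigB n k ⊆ Q := H x hxQ _ (mem_cparts.2 (Or.inl rfl)) (mem_bigB.2 hxk)
      have hQb : Q = bigB n k := by
        apply Finset.Subset.antisymm _ hbig
        intro y hy
        have hy' := mem_bigB.1 (hQT hy)
        rw [mem_bigB]
        rcases Nat.lt_or_ge (y : ℕ) (k + 1) with h | h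
        · omega
        · exfalso
          have hy2 : y = (⟨k + 1, hk⟩ : Fin n) := Fin.ext (by simp; omega)
          exact h1 (hy2 ▸ hy)
      rw [hQb, mem_cparts]
      exact Or.inl rfl
    · exfalso
      obtain ⟨y, hy⟩ := z.nonempty_of_mem_parts hQ
      have hy' := mem_bigB.1 (hQT hy)
      have h3 : ¬(y : ℕ) ≤ k := fun h => h2 ⟨y, hy, h⟩
      have hy2 : y = (⟨k + 1, hk⟩ : Fin n) := Fin.ext (by simp; omega)
      exact h1 (hy2 ▸ hy)

lemma key_eq (hn : 0 < n) (hk : k + 1 < n)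
    {z : Finpartition (univ : Finset (Fin n))}
    (hsub : z.parts ⊆ insert (bigB n (k + 1)) (cparts n k))
    (hT : bigB n (k + 1) ∈ z.parts) : z = cpart n (k + 1) hn := by
  apply Finpartition.ext
  rw [cpart_parts]
  apply Finset.Subset.antisymm
  · intro Q hQ
    rcases mem_insert.1 (hsub hQ) with rfl | hQ'
    · exact mem_cparts.2 (Or.inl rfl)
    · rcases mem_cparts.1 hQ' with rfl | ⟨a, ha, rfl⟩
      · exfalso
        have h0Q : (⟨0, hn⟩ : Fin n) ∈ bigB n k := mem_bigB.2 (by simp)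
        have h0T : (⟨0, hn⟩ : Fin n) ∈ bigB n (k + 1) := mem_bigB.2 (by simp)
        have := z.eq_of_mem_parts hQ hT h0Q h0T
        have h1 : (⟨k + 1, hk⟩ : Fin n) ∈ bigB n (k + 1) := mem_bigB.2 (by simp)
        rw [← this, mem_bigB] at h1
        simp at h1
      · by_cases h : (a : ℕ) ≤ k + 1
        · exfalso
          have haT : a ∈ bigB n (k + 1) := mem_bigB.2 h
          have := z.eq_of_mem_parts hQ hT (mem_singleton_self a) haT
          have h0T : (⟨0, hn⟩ : Fin n) ∈ bigB n (k + 1) := mem_bigB.2 (by simp)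
          rw [← this, mem_singleton] at h0T
          have := congrArg Fin.val h0T
          simp at this
          omega
        · exact mem_cparts.2 (Or.inr ⟨a, by omega, rfl⟩)
  · intro Q hQ
    rcases mem_cparts.1 hQ with rfl | ⟨a, ha, rfl⟩
    · exact hT
    · obtain ⟨P, hP, haP⟩ := z.exists_mem (mem_univ a)
      rcases mem_insert.1 (hsub hP) with rfl | hP'
      · rw [mem_bigB] at haP; omega
      · rcases mem_cparts.1 hP' with rfl | ⟨b, hb, rfl⟩
        · rw [mem_bigB] at haP; omega
        · rw [mem_singleton] at haP
          rwa [haP]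

lemma partsub (hn : 0 < n) (hk : k + 1 < n) {z : Finpartition (univ : Finset (Fin n))}
    (h1 : cpart n k hn ≤ z) (h2 : z ≤ cpart n (k + 1) hn) :
    z.parts ⊆ insert (bigB n (k + 1)) (cparts n k) := by
  intro Q hQ
  obtain ⟨C, hC, hQC⟩ := h2 hQ
  rcases mem_cparts.1 hC with rfl | ⟨a, ha, rfl⟩
  · rcases partclass hn hk h1 hQ hQC with rfl | h
    · exact mem_insert_self _ _
    · exact mem_insert_of_mem h
  · have hQa : Q = {a} := by
      rcases Finset.subset_singleton_iff.1 hQC with rfl | h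
      · exact absurd (z.nonempty_of_mem_parts hQ) (by simp)
      · exact h
    rw [hQa]
    exact mem_insert_of_mem (mem_cparts.2 (Or.inr ⟨a, by omega, rfl⟩))

lemma cpart_covby (hn : 0 < n) (hk : k + 1 < n) : cpart n k hn ⋖ cpart n (k + 1) hn := by
  refine ⟨cpart_lt_succ hn hk, fun z h1 h2 => ?_⟩
  have hsub := partsub hn hk h1.le h2.le
  by_cases hT : bigB n (k + 1) ∈ z.parts
  · exact h2.ne (key_eq hn hk hsub hT)
  · have hs : z.parts ⊆ cparts n k := fun Q hQ =>
      (mem_insert.1 (hsub hQ)).resolve_left fun e => hT (e ▸ hQ)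
    exact h1.ne' (parts_subset_eq hs)

lemma cpart_diff (hn : 0 < n) (hk : k + 1 < n) :
    (cpart n (k + 1) hn).parts \ (cpart n k hn).parts = {bigB n (k + 1)} := by
  apply Finset.Subset.antisymm
  · intro Q hQ
    rw [mem_sdiff, cpart_parts, cpart_parts] at hQ
    obtain ⟨hQ1, hQ2⟩ := hQ
    rcases mem_cparts.1 hQ1 with rfl | ⟨a, ha, rfl⟩
    · exact mem_singleton_self _
    · exact absurd (mem_cparts.2 (Or.inr ⟨a, by omega, rfl⟩)) hQ2
  · rw [singleton_subset_iff, mem_sdiff, cpart_parts, cpart_parts]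
    exact ⟨mem_cparts.2 (Or.inl rfl), bigB_succ_not_mem hn hk⟩

lemma sup_bigB (hm : m < n) : (bigB n m).sup (fun a => (a : ℕ) + 1) = m + 1 := by
  apply le_antisymm
  · exact Finset.sup_le fun a ha => by rw [mem_bigB] at ha; omega
  · have h : (⟨m, hm⟩ : Fin n) ∈ bigB n m := mem_bigB.2 (by simp)
    simpa using Finset.le_sup (f := fun a : Fin n => (a : ℕ) + 1) h

lemma chi_cpart (hn : 0 < n) (hk : k + 1 < n) :
    chi (cpart n k hn) (cpart n (k + 1) hn) = k + 2 := by
  rw [chi, cpart_diff hn hk, Finset.sup_singleton, sup_bigB hk]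

end chain

lemma chi_mem_Icc {n : ℕ} {x y : Finpartition (univ : Finset (Fin n))} (hxy : x ⋖ y) :
    chi x y ∈ Finset.Icc 2 n := by
  rw [mem_Icc]
  obtain ⟨B, hB⟩ := diff_nonempty' hxy.ne
  rw [mem_sdiff] at hB
  obtain ⟨hB1, hB2⟩ := hB
  obtain ⟨u, hu, v, hv, huv⟩ := exists_two hxy.le hB1 hB2
  constructor
  · have h1 : 1 ≤ (u : ℕ) ∨ 1 ≤ (v : ℕ) := by
      by_contra h
      push_neg at h
      exact huv (Fin.ext (by omega))
    have hfB : 2 ≤ B.sup fun a => (a : ℕ) + 1 := by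
      have h2 := Finset.le_sup (f := fun a : Fin n => (a : ℕ) + 1) hu
      have h3 := Finset.le_sup (f := fun a : Fin n => (a : ℕ) + 1) hv
      omega
    exact le_trans hfB (Finset.le_sup (mem_sdiff.2 ⟨hB1, hB2⟩))
  · apply Finset.sup_le
    intro C _
    apply Finset.sup_le
    intro a _
    have := a.isLt
    omega

open Finset in
/-- with the Wachs labeling of the partition lattice `Π_n`, every
maximal chain from `⊥` to `⊤` has all labels in `{2, ..., n}`, and the unique
strictly increasing maximal chain has label word `2, 3, ..., n` and is obtained by
successively merging the block `{1, ..., k-1}` with `{k}`. -/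
theorem statement19 (n : ℕ) (hn : 1 ≤ n) :
    (∀ c : ℕ -> Finpartition (Finset.univ : Finset (Fin n)),
      c 0 = ⊥ -> c (n - 1) = ⊤ -> (∀ k, k < n - 1 -> c k ⋖ c (k + 1)) ->
      ∀ k, k < n - 1 -> chi (c k) (c (k + 1)) ∈ Finset.Icc 2 n) ∧
    ∃ c : ℕ -> Finpartition (Finset.univ : Finset (Fin n)),
      c 0 = ⊥ ∧ c (n - 1) = ⊤ ∧ (∀ k, k < n - 1 -> c k ⋖ c (k + 1)) ∧
      (∀ k, k < n - 1 -> chi (c k) (c (k + 1)) = k + 2) ∧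
      (∀ m, m < n -> ∀ B ∈ (c m).parts,
        B = Finset.univ.filter (fun a : Fin n => (a : ℕ) ≤ m) ∨
          ∃ a : Fin n, m < (a : ℕ) ∧ B = {a}) ∧
      ∀ c' : ℕ -> Finpartition (Finset.univ : Finset (Fin n)),
        c' 0 = ⊥ -> c' (n - 1) = ⊤ -> (∀ k, k < n - 1 -> c' k ⋖ c' (k + 1)) ->
        (∀ k, k < n - 1 -> ∀ l, l < n - 1 -> k < l ->
          chi (c' k) (c' (k + 1)) < chi (c' l) (c' (l + 1))) ->
        ∀ m, m < n -> c' m = c m := by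
  have hn' : 0 < n := hn
  constructor
  · intro c _ _ hcov k hk
    exact chi_mem_Icc (hcov k hk)
  · refine ⟨fun m => cpart n m hn', (cpart_bot hn').symm, (cpart_top hn').symm, ?_, ?_, ?_, ?_⟩
    · intro k hk
      exact cpart_covby hn' (by omega)
    · intro k hk
      exact chi_cpart hn' (by omega)
    · intro m _ B hB
      exact mem_cparts.1 hB
    · intro c' h0 h1 hcov hmono
      have hA : ∀ k, k < n - 1 → k + 2 ≤ chi (c' k) (c' (k + 1)) := by
        intro k
        induction k with
        | zero =>
          intro hk
          have := chi_mem_Icc (hcov 0 hk)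
          rw [mem_Icc] at this
          omega
        | succ k ih =>
          intro hk
          have hk' : k < n - 1 := by omega
          have h2 := hmono k hk' (k + 1) hk (by omega)
          have h3 := ih hk'
          omega
      have hC : ∀ d k, k + d < n - 1 →
          chi (c' k) (c' (k + 1)) + d ≤ chi (c' (k + d)) (c' (k + d + 1)) := by
        intro d
        induction d with
        | zero => intro k hk; simp
        | succ d ih =>
          intro k hk
          have h1' := ih k (by omega)
          have h2' := hmono (k + d) (by omega) (k + d + 1) (by omega) (by omega)
          have he : k + (d + 1) = k + d + 1 := by omega
          rw [he]
          omega
      have hlab : ∀ k, k < n - 1 → chi (c' k) (c' (k + 1)) = k + 2 := by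
        intro k hk
        have hA' := hA k hk
        have hub := chi_mem_Icc (hcov (n - 2) (by omega))
        rw [mem_Icc] at hub
        have he : k + (n - 2 - k) = n - 2 := by omega
        have hc := hC (n - 2 - k) k (by omega)
        rw [he] at hc
        omega
      intro m
      induction m with
      | zero => intro _; rw [h0]; exact cpart_bot hn'
      | succ m ih =>
        intro hm
        have hmlt : m < n - 1 := by omega
        have hcm : c' m = cpart n m hn' := ih (by omega)
        have hcov' := hcov m hmlt
        rw [hcm] at hcov'
        have hlabm := hlab m hmlt
        rw [hcm] at hlabm
        have hle : cpart n m hn' ≤ c' (m + 1) := hcov'.le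
        have hne : cpart n m hn' ≠ c' (m + 1) := hcov'.ne
        have hkm : m + 1 < n := hm
        have hTsub : ∀ Q ∈ (c' (m + 1)).parts, Q ∉ cparts n m → Q ⊆ bigB n (m + 1) := by
          intro Q hQ hQ2
          have hQD : Q ∈ (c' (m + 1)).parts \ (cpart n m hn').parts := mem_sdiff.2 ⟨hQ, hQ2⟩
          have hfQ : (Q.sup fun a => (a : ℕ) + 1) ≤ m + 2 := by
            rw [chi] at hlabm
            exact hlabm ▸ Finset.le_sup hQD
          intro x hx
          have h4 := Finset.le_sup (f := fun a : Fin n => (a : ℕ) + 1) hx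
          rw [mem_bigB]
          omega
        have hclass : ∀ Q ∈ (c' (m + 1)).parts, Q ∉ cparts n m → Q = bigB n (m + 1) := by
          intro Q hQ hQ2
          rcases partclass hn' hkm hle hQ (hTsub Q hQ hQ2) with h | h
          · exact h
          · exact absurd h hQ2
        have hsub : (c' (m + 1)).parts ⊆ insert (bigB n (m + 1)) (cparts n m) := by
          intro Q hQ
          by_cases h : Q ∈ cparts n m
          · exact mem_insert_of_mem h
          · rw [hclass Q hQ h]; exact mem_insert_self _ _
        have hT : bigB n (m + 1) ∈ (c' (m + 1)).parts := by
          obtain ⟨B, hB⟩ := diff_nonempty' hne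
          rw [mem_sdiff] at hB
          rw [← hclass B hB.1 hB.2]
          exact hB.1
        exact key_eq hn' hkm hsub hT
end
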